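/- (Recursion for the individual shift errors in Byz-DASHA-PAGE.) Suppose h_i^{t+1} = ∇f_i(x^{t+1}) with probability p (same coin for all i) and h_i^{t+1} = h_i^t + Δ̂_i(x^{t+1}, x^t) otherwise, where the Δ̂_i are conditionally unbiased mini-batch estimators with batch size b satisfying the local Hessian variance bound. Then: (1/G) Σ_{i∈𝒢} E‖h_i^{t+1} − ∇f_i(x^{t+1})‖² ≤ (1−p)·(1/G) Σ_{i∈𝒢} E‖h_i^t − ∇f_i(x^t)‖² + ((1−p)𝓛±²/b)·E‖x^{t+1} − x^t‖². -/

import Mathlib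

open MeasureTheory Finset

lemma my_pi_map_eval {ι : Type*} [Fintype ι] {Ωb : ι → Type*} [∀ i, MeasurableSpace (Ωb i)]
    (νb : ∀ i, Measure (Ωb i)) [∀ i, IsProbabilityMeasure (νb i)] (i : ι) :
    (Measure.pi νb).map (fun wb => wb i) = νb i := by
  classical
  ext s hs
  rw [Measure.map_apply (measurable_pi_apply i) hs,
    show (fun wb : ∀ j, Ωb j => wb i) ⁻¹' s
      = Set.pi Set.univ (Function.update (fun j => (Set.univ : Set (Ωb j))) i s) from
      Set.eval_preimage, Measure.pi_pi, Fintype.prod_eq_single i ?_]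
  · simp
  · intro j hj; simp [Function.update_of_ne hj]

lemma my_bias_variance {E : Type*} [NormedAddCommGroup E] [InnerProductSpace ℝ E]
    [CompleteSpace E]
    {Ω : Type*} [MeasurableSpace Ω] (ν : Measure Ω) [IsProbabilityMeasure ν]
    (D : Ω → E) (u m : E) (hint : Integrable D ν)
    (hint2 : Integrable (fun w => ‖D w - m‖ ^ 2) ν)
    (hmean : ∫ w, D w ∂ν = m) :
    ∫ w, ‖u + (D w - m)‖ ^ 2 ∂ν = ‖u‖ ^ 2 + ∫ w, ‖D w - m‖ ^ 2 ∂ν := by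
  have hv : Integrable (fun w => D w - m) ν := hint.sub (integrable_const m)
  have hiv : Integrable (fun w => (inner ℝ u (D w - m) : ℝ)) ν := hv.const_inner u
  have hvz : ∫ w, (D w - m) ∂ν = 0 := by
    rw [integral_sub hint (integrable_const m), integral_const, hmean]
    simp
  have hinz : ∫ w, (inner ℝ u (D w - m) : ℝ) ∂ν = (0 : ℝ) := by
    rw [integral_inner hv u, hvz, inner_zero_right]
  have hexp : ∀ w, ‖u + (D w - m)‖ ^ 2
      = ‖u‖ ^ 2 + 2 * (inner ℝ u (D w - m) : ℝ) + ‖D w - m‖ ^ 2 :=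
    fun w => norm_add_sq_real u _
  have h1 : Integrable (fun w => ‖u‖ ^ 2 + 2 * (inner ℝ u (D w - m) : ℝ)) ν :=
    (integrable_const _).add (hiv.const_mul 2)
  simp_rw [hexp]
  rw [integral_add h1 hint2, integral_add (integrable_const _) (hiv.const_mul 2),
    integral_const, integral_const_mul, hinz]
  simp

/-- Recursion for the individual shift errors in Byz-DASHA-PAGE. -/
theorem local_shift_error_recursion_byz_dasha_page
    {d : ℕ} {ι : Type*} [Fintype ι]
    -- local loss functions and their average
    (fS : ι → EuclideanSpace ℝ (Fin d) → ℝ)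
    (f : EuclideanSpace ℝ (Fin d) → ℝ)
    (hf : ∀ x, f x = (1 / (Fintype.card ι : ℝ)) * ∑ i, fS i x)
    (hdiff : ∀ i, Differentiable ℝ (fS i))
    -- probability of full-gradient synchronization
    (p : ℝ) (hp0 : 0 < p) (hp1 : p ≤ 1)
    -- past randomness
    {Ω₀ : Type*} [MeasurableSpace Ω₀] (μ₀ : Measure Ω₀) [IsProbabilityMeasure μ₀]
    -- coin randomness (the same coin for all workers)
    (μc : Measure Bool) [IsProbabilityMeasure μc]
    (hcoin : μc {true} = ENNReal.ofReal p)
    -- mini-batch estimator randomness (independent across workers)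
    {Ωb : ι → Type*} [∀ i, MeasurableSpace (Ωb i)]
    (νb : ∀ i, Measure (Ωb i)) [∀ i, IsProbabilityMeasure (νb i)]
    -- mini-batch estimators: conditionally unbiased, local Hessian variance with batch size b
    (Dhat : (i : ι) → EuclideanSpace ℝ (Fin d) → EuclideanSpace ℝ (Fin d) →
      Ωb i → EuclideanSpace ℝ (Fin d))
    (hDmeas : ∀ i, Measurable fun q :
        (EuclideanSpace ℝ (Fin d) × EuclideanSpace ℝ (Fin d)) × Ωb i =>
        Dhat i q.1.1 q.1.2 q.2)
    (hDint : ∀ i x y, Integrable (fun wb => Dhat i x y wb) (νb i))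
    (hDint2 : ∀ i x y, Integrable
      (fun wb => ‖Dhat i x y wb - (gradient (fS i) x - gradient (fS i) y)‖ ^ 2) (νb i))
    (hDunbiased : ∀ i x y,
      ∫ wb, Dhat i x y wb ∂(νb i) = gradient (fS i) x - gradient (fS i) y)
    (b Lloc : ℝ) (hb : 0 < b) (hLloc : 0 ≤ Lloc)
    (hlocal : ∀ x y, (1 / (Fintype.card ι : ℝ)) *
        ∑ i, ∫ wb, ‖Dhat i x y wb - (gradient (fS i) x - gradient (fS i) y)‖ ^ 2 ∂(νb i)
      ≤ (Lloc ^ 2 / b) * ‖x - y‖ ^ 2)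
    -- current iterates and shifts (measurable with respect to the past)
    (xt xt1 : Ω₀ → EuclideanSpace ℝ (Fin d))
    (ht : ι → Ω₀ → EuclideanSpace ℝ (Fin d))
    (hxtm : Measurable xt) (hxt1m : Measurable xt1) (hhtm : ∀ i, Measurable (ht i))
    -- the new shifts: with probability p set to the full gradient,
    -- otherwise add a stochastic gradient difference
    (ht1 : ι → Ω₀ × Bool × (∀ i, Ωb i) → EuclideanSpace ℝ (Fin d))
    (hht1 : ∀ i w, ht1 i w =
      if w.2.1 then gradient (fS i) (xt1 w.1)
      else ht i w.1 + Dhat i (xt1 w.1) (xt w.1) (w.2.2 i))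
    -- integrability of the relevant squared norms
    (hint1 : ∀ i, Integrable
      (fun w : Ω₀ × Bool × (∀ i, Ωb i) =>
        ‖ht1 i w - gradient (fS i) (xt1 w.1)‖ ^ 2)
      (μ₀.prod (μc.prod (Measure.pi νb))))
    (hint2 : ∀ i, Integrable
      (fun ω₀ => ‖ht i ω₀ - gradient (fS i) (xt ω₀)‖ ^ 2) μ₀)
    (hint3 : Integrable (fun ω₀ => ‖xt1 ω₀ - xt ω₀‖ ^ 2) μ₀) :
    (1 / (Fintype.card ι : ℝ)) *
        ∑ i, ∫ w, ‖ht1 i w - gradient (fS i) (xt1 w.1)‖ ^ 2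
          ∂(μ₀.prod (μc.prod (Measure.pi νb)))
      ≤ (1 - p) * ((1 / (Fintype.card ι : ℝ)) *
            ∑ i, ∫ ω₀, ‖ht i ω₀ - gradient (fS i) (xt ω₀)‖ ^ 2 ∂μ₀)
        + ((1 - p) * Lloc ^ 2 / b) *
          ∫ ω₀, ‖xt1 ω₀ - xt ω₀‖ ^ 2 ∂μ₀ := by
  classical
  have hp1' : 0 ≤ 1 - p := by linarith
  have hΔnn : 0 ≤ ∫ ω₀, ‖xt1 ω₀ - xt ω₀‖ ^ 2 ∂μ₀ :=
    integral_nonneg fun _ => by positivity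
  rcases isEmpty_or_nonempty ι with hE | hNE
  · simp only [univ_eq_empty, sum_empty, mul_zero, zero_add]
    have : 0 ≤ (1 - p) * Lloc ^ 2 / b := by positivity
    nlinarith
  -- nonempty case
  set G : ℝ := (Fintype.card ι : ℝ) with hG
  have hGpos : 0 < G := by
    rw [hG]; exact Nat.cast_pos.mpr (Fintype.card_pos_iff.mpr hNE)
  -- coin probabilities
  have hqf : (μc {false}).toReal = 1 - p := by
    have hc : ({false} : Set Bool) = ({true} : Set Bool)ᶜ := by
      ext c; cases c <;> simp
    rw [hc, measure_compl (measurableSet_singleton true) (measure_ne_top μc _),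
      measure_univ, hcoin, ENNReal.toReal_sub_of_le (ENNReal.ofReal_le_one.mpr hp1)
        ENNReal.one_ne_top]
    simp [ENNReal.toReal_ofReal hp0.le]
  have hqt : (μc {true}).toReal = p := by
    rw [hcoin, ENNReal.toReal_ofReal hp0.le]
  -- abbreviations
  set ν : Measure (Bool × ∀ i, Ωb i) := μc.prod (Measure.pi νb) with hν
  set J : ι → Ω₀ → ℝ := fun i ω₀ =>
    ∫ y, ‖ht1 i (ω₀, y) - gradient (fS i) (xt1 ω₀)‖ ^ 2 ∂ν with hJ
  set V : ι → Ω₀ → ℝ := fun i ω₀ =>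
    ∫ wb, ‖Dhat i (xt1 ω₀) (xt ω₀) wb -
      (gradient (fS i) (xt1 ω₀) - gradient (fS i) (xt ω₀))‖ ^ 2 ∂(νb i) with hV
  have hJint : ∀ i, Integrable (J i) μ₀ := fun i => (hint1 i).integral_prod_left
  have hIeq : ∀ i, (∫ w, ‖ht1 i w - gradient (fS i) (xt1 w.1)‖ ^ 2 ∂(μ₀.prod ν))
      = ∫ ω₀, J i ω₀ ∂μ₀ := fun i => integral_prod _ (hint1 i)
  have hJnn : ∀ i ω₀, 0 ≤ J i ω₀ := fun i ω₀ =>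
    integral_nonneg fun _ => by positivity
  -- a.e. pointwise evaluation of J
  have hJae : ∀ i, ∀ᵐ ω₀ ∂μ₀, J i ω₀
      = (1 - p) * (‖ht i ω₀ - gradient (fS i) (xt ω₀)‖ ^ 2 + V i ω₀) := by
    intro i
    filter_upwards [(hint1 i).prod_right_ae] with ω₀ hsec
    set x1 := xt1 ω₀
    set x0 := xt ω₀
    set g1 := gradient (fS i) x1
    set g0 := gradient (fS i) x0
    -- the inner (over mini-batch) integral in the "false" branch
    have hDm : Measurable (fun z => Dhat i x1 x0 z) :=
      (hDmeas i).comp ((measurable_const : Measurable fun _ : Ωb i => (x1, x0)).prodMk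
        measurable_id)
    have hhm : Measurable (fun z => ‖ht i ω₀ + Dhat i x1 x0 z - g1‖ ^ 2) :=
      (((measurable_const.add hDm).sub measurable_const).norm).pow_const 2
    have hfalse : (∫ wb : ∀ j, Ωb j, ‖ht i ω₀ + Dhat i x1 x0 (wb i) - g1‖ ^ 2
        ∂(Measure.pi νb)) = ‖ht i ω₀ - g0‖ ^ 2 + V i ω₀ := by
      have hmap : (∫ z, ‖ht i ω₀ + Dhat i x1 x0 z - g1‖ ^ 2 ∂((Measure.pi νb).map
          (fun wb => wb i)))
          = ∫ wb : ∀ j, Ωb j, ‖ht i ω₀ + Dhat i x1 x0 (wb i) - g1‖ ^ 2 ∂(Measure.pi νb) :=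
        integral_map (measurable_pi_apply i).aemeasurable hhm.aestronglyMeasurable
      rw [← hmap, my_pi_map_eval νb i]
      have hrw : ∀ z, ht i ω₀ + Dhat i x1 x0 z - g1
          = (ht i ω₀ - g0) + (Dhat i x1 x0 z - (g1 - g0)) := fun z => by abel
      simp_rw [hrw]
      exact my_bias_variance (νb i) (Dhat i x1 x0) _ _ (hDint i x1 x0)
        (hDint2 i x1 x0) (hDunbiased i x1 x0)
    -- compute J via Fubini on Bool × Π
    have hJcalc : J i ω₀ = ∫ c, (∫ wb, ‖ht1 i (ω₀, (c, wb)) - g1‖ ^ 2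
        ∂(Measure.pi νb)) ∂μc := integral_prod _ hsec
    rw [hJcalc, integral_fintype hsec.integral_prod_left]
    have htrue : (∫ wb : ∀ j, Ωb j, ‖ht1 i (ω₀, (true, wb)) - g1‖ ^ 2
        ∂(Measure.pi νb)) = 0 := by
      simp [hht1, g1, x1]
    have hfalse' : (∫ wb : ∀ j, Ωb j, ‖ht1 i (ω₀, (false, wb)) - g1‖ ^ 2
        ∂(Measure.pi νb)) = ‖ht i ω₀ - g0‖ ^ 2 + V i ω₀ := by
      simp only [hht1]
      simpa using hfalse
    simp [Fintype.sum_bool, htrue, hfalse', measureReal_def, hqf, hqt, smul_eq_mul]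
  -- dominating function
  set g : Ω₀ → ℝ := fun ω₀ =>
    (1 - p) * ∑ i, ‖ht i ω₀ - gradient (fS i) (xt ω₀)‖ ^ 2
      + ((1 - p) * (G * (Lloc ^ 2 / b))) * ‖xt1 ω₀ - xt ω₀‖ ^ 2 with hg
  have hgint : Integrable g μ₀ :=
    ((integrable_finset_sum univ fun i _ => hint2 i).const_mul _).add (hint3.const_mul _)
  have hle : (fun ω₀ => ∑ i, J i ω₀) ≤ᵐ[μ₀] g := by
    filter_upwards [ae_all_iff.mpr hJae] with ω₀ hω
    have hVb : ∑ i, V i ω₀ ≤ G * ((Lloc ^ 2 / b) * ‖xt1 ω₀ - xt ω₀‖ ^ 2) := by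
      have h := hlocal (xt1 ω₀) (xt ω₀)
      have h2 : (1 / G) * ∑ i, V i ω₀ ≤ (Lloc ^ 2 / b) * ‖xt1 ω₀ - xt ω₀‖ ^ 2 := h
      calc ∑ i, V i ω₀ = G * ((1 / G) * ∑ i, V i ω₀) := by
            field_simp
        _ ≤ G * ((Lloc ^ 2 / b) * ‖xt1 ω₀ - xt ω₀‖ ^ 2) :=
            mul_le_mul_of_nonneg_left h2 hGpos.le
    have hsum : ∑ i, J i ω₀
        = (1 - p) * ∑ i, ‖ht i ω₀ - gradient (fS i) (xt ω₀)‖ ^ 2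
          + (1 - p) * ∑ i, V i ω₀ := by
      rw [Finset.sum_congr rfl fun i _ => hω i]
      simp only [mul_add, Finset.sum_add_distrib, ← Finset.mul_sum]
    rw [hsum]
    have := mul_le_mul_of_nonneg_left hVb hp1'
    simp only [hg]
    nlinarith [this]
  have hsumJ : ∑ i, ∫ ω₀, J i ω₀ ∂μ₀ = ∫ ω₀, ∑ i, J i ω₀ ∂μ₀ :=
    (integral_finset_sum univ fun i _ => hJint i).symm
  have hmono : ∫ ω₀, ∑ i, J i ω₀ ∂μ₀ ≤ ∫ ω₀, g ω₀ ∂μ₀ :=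
    integral_mono_of_nonneg
      (Filter.Eventually.of_forall fun ω₀ => Finset.sum_nonneg fun i _ => hJnn i ω₀)
      hgint hle
  have hgval : ∫ ω₀, g ω₀ ∂μ₀
      = (1 - p) * ∑ i, (∫ ω₀, ‖ht i ω₀ - gradient (fS i) (xt ω₀)‖ ^ 2 ∂μ₀)
        + ((1 - p) * (G * (Lloc ^ 2 / b))) * ∫ ω₀, ‖xt1 ω₀ - xt ω₀‖ ^ 2 ∂μ₀ := by
    simp only [hg]
    rw [integral_add ((integrable_finset_sum univ fun i _ => hint2 i).const_mul _)
      (hint3.const_mul _), integral_const_mul, integral_const_mul,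
      integral_finset_sum univ fun i _ => hint2 i]
  calc (1 / G) * ∑ i, ∫ w, ‖ht1 i w - gradient (fS i) (xt1 w.1)‖ ^ 2 ∂(μ₀.prod ν)
      = (1 / G) * ∑ i, ∫ ω₀, J i ω₀ ∂μ₀ := by
        rw [Finset.sum_congr rfl fun i _ => hIeq i]
    _ = (1 / G) * ∫ ω₀, ∑ i, J i ω₀ ∂μ₀ := by rw [hsumJ]
    _ ≤ (1 / G) * ∫ ω₀, g ω₀ ∂μ₀ :=
        mul_le_mul_of_nonneg_left hmono (by positivity)
    _ = (1 - p) * ((1 / G) *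
            ∑ i, ∫ ω₀, ‖ht i ω₀ - gradient (fS i) (xt ω₀)‖ ^ 2 ∂μ₀)
        + ((1 - p) * Lloc ^ 2 / b) * ∫ ω₀, ‖xt1 ω₀ - xt ω₀‖ ^ 2 ∂μ₀ := by
        rw [hgval]
        field_simp
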